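/- (Combinatorial Beurling criterion.) Let S be a finite cover of a set X, Γ a nonempty curve family, p > 1, and let ρ be an admissible metric normalized so that L_ρ(Γ,S) = 1. Then ρ is optimal, i.e. mod_p(Γ,ρ,S) = mod_p(Γ,S), if and only if there exist a nonempty finite subfamily Γ₀ ⊆ Γ and nonnegative scalars (λ_γ)_{γ∈Γ₀} such that: (i) ℓ_ρ(γ) = 1 for every γ ∈ Γ₀, and (ii) for every s ∈ S, p·ρ(s)^{p−1} = Σ_{γ∈Γ₀, s∩γ≠∅} λ_γ. In this case mod_p(Γ,S) = (1/p)·Σ_{γ∈Γ₀} λ_γ. Moreover the optimal metric is unique up to multiplication by a positive scalar. -/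

import Mathlib

open scoped ENNReal
open Set

attribute [local instance] Classical.propDecidable

namespace CombModFin

variable {X : Type*}

/-- The `ρ`-length of a set `K`: the sum of `ρ s` over the elements `s` of the cover `S`
    meeting `K`. -/
noncomputable def len (S : Finset (Set X)) (ρ : Set X → ℝ≥0∞) (K : Set X) : ℝ≥0∞ :=
  ∑ s ∈ S.filter fun s => (s ∩ K).Nonempty, ρ s

/-- `L_ρ(Γ,S)`: the infimum of the `ρ`-lengths of the curves of `Γ`. -/
noncomputable def Lmin (S : Finset (Set X)) (ρ : Set X → ℝ≥0∞) (Γ : Set (Set X)) : ℝ≥0∞ :=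
  ⨅ γ ∈ Γ, len S ρ γ

/-- `V_p(ρ)`: the `p`-volume of the admissible metric `ρ`. -/
noncomputable def vol (S : Finset (Set X)) (ρ : Set X → ℝ≥0∞) (p : ℝ) : ℝ≥0∞ :=
  ∑ s ∈ S, ρ s ^ p

/-- An admissible metric: a function `ρ : S → [0,∞)` which is not identically zero on `S`. -/
def Admissible (S : Finset (Set X)) (ρ : Set X → ℝ≥0∞) : Prop :=
  (∀ s ∈ S, ρ s ≠ ∞) ∧ ∃ s ∈ S, ρ s ≠ 0

/-- `mod_p(Γ,ρ,S) = V_p(ρ) / L_ρ(Γ,S)^p`. -/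
noncomputable def modWith (S : Finset (Set X)) (Γ : Set (Set X)) (ρ : Set X → ℝ≥0∞)
    (p : ℝ) : ℝ≥0∞ :=
  vol S ρ p / Lmin S ρ Γ ^ p

/-- The combinatorial `p`-modulus: the infimum of `mod_p(Γ,ρ,S)` over admissible metrics `ρ`. -/
noncomputable def cmod (S : Finset (Set X)) (Γ : Set (Set X)) (p : ℝ) : ℝ≥0∞ :=
  ⨅ (ρ : Set X → ℝ≥0∞) (_ : Admissible S ρ), modWith S Γ ρ p

end CombModFin

open scoped RealInnerProductSpace

set_option linter.unusedSectionVars false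

namespace BeurlingAux

variable {E : Type*} [NormedAddCommGroup E] [InnerProductSpace ℝ E] [FiniteDimensional ℝ E]
variable {m : Type*} [Fintype m]

/-- Carathéodory-type reduction: a conic combination can be rewritten with linearly
independent support. -/
lemma exists_linIndep_conic (v : m → E) (lam : m → ℝ) (hlam : ∀ i, 0 ≤ lam i) :
    ∃ mu : m → ℝ, (∀ i, 0 ≤ mu i) ∧ (∑ i, mu i • v i = ∑ i, lam i • v i) ∧
      LinearIndependent ℝ (fun i : {i // mu i ≠ 0} => v (i : m)) := by
  classical
  suffices H : ∀ n (lam : m → ℝ), (Finset.univ.filter fun i => lam i ≠ 0).card ≤ n →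
      (∀ i, 0 ≤ lam i) →
      ∃ mu : m → ℝ, (∀ i, 0 ≤ mu i) ∧ (∑ i, mu i • v i = ∑ i, lam i • v i) ∧
        LinearIndependent ℝ (fun i : {i // mu i ≠ 0} => v (i : m)) by
    exact H _ lam le_rfl hlam
  intro n
  induction n with
  | zero =>
    intro lam hcard _
    have hz : ∀ i, lam i = 0 := by
      intro i
      by_contra h
      have : (Finset.univ.filter fun i => lam i ≠ 0).Nonempty := ⟨i, by simp [h]⟩
      have := Finset.card_pos.mpr this
      omega
    refine ⟨lam, fun i => (hz i).ge, rfl, ?_⟩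
    have : IsEmpty {i // lam i ≠ 0} := ⟨fun i => i.2 (hz i.1)⟩
    exact linearIndependent_empty_type
  | succ n ih =>
    intro lam hcard hlam
    by_cases hli : LinearIndependent ℝ (fun i : {i // lam i ≠ 0} => v (i : m))
    · exact ⟨lam, hlam, rfl, hli⟩
    · obtain ⟨g, hg0, j, hgj⟩ := Fintype.not_linearIndependent_iff.mp hli
      -- extend g by zero
      set c0 : m → ℝ := fun i => if h : lam i ≠ 0 then g ⟨i, h⟩ else 0 with hc0
      have hc0sum : ∑ i, c0 i • v i = 0 := by
        have e1 : ∑ i, c0 i • v i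
            = ∑ i ∈ Finset.univ.filter (fun i => lam i ≠ 0), c0 i • v i := by
          refine (Finset.sum_filter_of_ne ?_).symm
          intro i _ h
          intro hh
          apply h
          have hz : c0 i = 0 := by simp [hc0, hh]
          rw [hz, zero_smul]
        have e2 : ∑ i ∈ Finset.univ.filter (fun i => lam i ≠ 0), c0 i • v i
            = ∑ i : {i // lam i ≠ 0}, c0 (i : m) • v (i : m) :=
          Finset.sum_subtype _ (fun x => by simp) _
        rw [e1, e2, ← hg0]
        refine Finset.sum_congr rfl fun i _ => ?_
        simp [hc0, i.2]
      have hc0supp : ∀ i, lam i = 0 → c0 i = 0 := by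
        intro i h; simp [hc0, h]
      -- choose the sign so that some coefficient is positive
      obtain ⟨c, hcsum, hcsupp, j0, hj0⟩ :
          ∃ c : m → ℝ, (∑ i, c i • v i = 0) ∧ (∀ i, lam i = 0 → c i = 0) ∧
            ∃ j0, 0 < c j0 := by
        rcases lt_or_gt_of_ne hgj with h | h
        · refine ⟨-c0, by simp [hc0sum], fun i hi => by simp [hc0supp i hi], (j : m), ?_⟩
          have : c0 (j : m) = g j := by simp [hc0, j.2]
          simp [this]; linarith
        · refine ⟨c0, hc0sum, hc0supp, (j : m), ?_⟩
          have : c0 (j : m) = g j := by simp [hc0, j.2]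
          rw [this]; exact h
      set P : Finset m := Finset.univ.filter fun i => 0 < c i with hP
      have hPne : P.Nonempty := ⟨j0, by simp [hP, hj0]⟩
      obtain ⟨i0, hi0P, hi0min⟩ := P.exists_min_image (fun i => lam i / c i) hPne
      have hci0 : 0 < c i0 := by simpa [hP] using hi0P
      set t : ℝ := lam i0 / c i0 with ht
      have ht0 : 0 ≤ t := div_nonneg (hlam i0) hci0.le
      set mu : m → ℝ := fun i => lam i - t * c i with hmu
      have hmu0 : ∀ i, 0 ≤ mu i := by
        intro i
        by_cases h : 0 < c i
        · have h1 := hi0min i (by simp [hP, h])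
          have h2 : t * c i ≤ lam i := by
            rw [← le_div_iff₀ h]; exact h1
          simp only [hmu]; linarith
        · push_neg at h
          have : t * c i ≤ 0 := mul_nonpos_of_nonneg_of_nonpos ht0 h
          simp only [hmu]; linarith [hlam i]
      have hmusum : ∑ i, mu i • v i = ∑ i, lam i • v i := by
        simp only [hmu, sub_smul, Finset.sum_sub_distrib, mul_smul]
        rw [← Finset.smul_sum, hcsum, smul_zero, sub_zero]
      have hmusupp : (Finset.univ.filter fun i => mu i ≠ 0) ⊂
          (Finset.univ.filter fun i => lam i ≠ 0) := by
        refine Finset.ssubset_iff_of_subset ?_ |>.mpr ?_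
        · intro i hi
          simp only [Finset.mem_filter, Finset.mem_univ, true_and] at hi ⊢
          intro h
          exact hi (by simp [hmu, h, hcsupp i h])
        · refine ⟨i0, ?_, ?_⟩
          · simp only [Finset.mem_filter, Finset.mem_univ, true_and]
            intro h
            exact absurd (hcsupp i0 h) hci0.ne'
          · simp only [Finset.mem_filter, Finset.mem_univ, true_and, not_not]
            simp only [hmu, ht]
            rw [div_mul_cancel₀ _ hci0.ne']
            ring
      have hcard' : (Finset.univ.filter fun i => mu i ≠ 0).card ≤ n := by
        have h1 := Finset.card_lt_card hmusupp
        omega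
      obtain ⟨mu', h1, h2, h3⟩ := ih mu hcard' hmu0
      exact ⟨mu', h1, h2.trans hmusum, h3⟩

end BeurlingAux

namespace BeurlingAux

variable {E : Type*} [NormedAddCommGroup E] [InnerProductSpace ℝ E] [FiniteDimensional ℝ E]
variable {m : Type*} [Fintype m]

lemma isClosed_conic (v : m → E) :
    IsClosed {x : E | ∃ lam : m → ℝ, (∀ i, 0 ≤ lam i) ∧ ∑ i, lam i • v i = x} := by
  classical
  have key : {x : E | ∃ lam : m → ℝ, (∀ i, 0 ≤ lam i) ∧ ∑ i, lam i • v i = x} =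
      ⋃ (T : {T : Finset m // LinearIndependent ℝ (fun i : T => v (i : m))}),
        {x : E | ∃ lam : m → ℝ, (∀ i, 0 ≤ lam i) ∧ (∀ i ∉ T.1, lam i = 0) ∧
          ∑ i, lam i • v i = x} := by
    ext x
    simp only [mem_setOf_eq, mem_iUnion]
    constructor
    · rintro ⟨lam, hlam, rfl⟩
      obtain ⟨mu, hmu0, hmusum, hmuli⟩ := exists_linIndep_conic v lam hlam
      set T : Finset m := Finset.univ.filter fun i => mu i ≠ 0 with hT
      have hli : LinearIndependent ℝ (fun i : T => v (i : m)) :=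
        hmuli.comp (fun i : T => ⟨i.1, (Finset.mem_filter.mp i.2).2⟩)
          (fun a b hab => Subtype.ext (by simpa using hab))
      exact ⟨⟨T, hli⟩, mu, hmu0, fun i hi => by
        by_contra hne; exact hi (by simp [hT, hne]), hmusum⟩
    · rintro ⟨T, lam, hlam, _, rfl⟩
      exact ⟨lam, hlam, rfl⟩
  rw [key]
  apply isClosed_iUnion_of_finite
  rintro ⟨T, hT⟩
  set L : ({i // i ∈ T} → ℝ) →ₗ[ℝ] E :=
    Fintype.linearCombination ℝ (fun i : T => v (i : m)) with hL
  have hker : LinearMap.ker L = ⊥ := by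
    rw [LinearMap.ker_eq_bot']
    intro y hy
    have := Fintype.linearIndependent_iff.mp hT y
      (by simpa [hL, Fintype.linearCombination_apply] using hy)
    funext i; exact this i
  have himg : {x : E | ∃ lam : m → ℝ, (∀ i, 0 ≤ lam i) ∧ (∀ i ∉ T, lam i = 0) ∧
      ∑ i, lam i • v i = x} = L '' {y | ∀ i, 0 ≤ y i} := by
    ext x
    simp only [mem_setOf_eq, mem_image]
    constructor
    · rintro ⟨lam, h0, hsupp, rfl⟩
      refine ⟨fun i => lam i, fun i => h0 _, ?_⟩
      rw [hL]
      simp only [Fintype.linearCombination_apply]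
      rw [Finset.sum_coe_sort T (fun i => lam i • v i)]
      apply Finset.sum_subset (Finset.subset_univ T)
      intro i _ hi
      rw [hsupp i hi, zero_smul]
    · rintro ⟨y, hy, rfl⟩
      set lam : m → ℝ := fun i => if h : i ∈ T then y ⟨i, h⟩ else 0 with hlam
      have hval : ∀ i : T, lam (i : m) = y i := by
        intro i; simp [hlam, i.2]
      refine ⟨lam, fun i => ?_, fun i hi => dif_neg hi, ?_⟩
      · rw [hlam]
        by_cases h : i ∈ T
        · simpa [h] using hy ⟨i, h⟩
        · simp [h]
      · rw [hL]
        simp only [Fintype.linearCombination_apply]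
        have e1 : ∑ i : {i // i ∈ T}, y i • v (i : m)
            = ∑ i : {i // i ∈ T}, lam (i : m) • v (i : m) :=
          Finset.sum_congr rfl fun i _ => by rw [hval]
        rw [e1, Finset.sum_coe_sort T (fun i => lam i • v i)]
        refine (Finset.sum_subset (Finset.subset_univ T) ?_).symm
        intro i _ hi; simp [hlam, dif_neg hi]
  rw [himg]
  refine (LinearMap.isClosedEmbedding_of_injective hker).isClosedMap _ ?_
  have : {y : ({i // i ∈ T} → ℝ) | ∀ i, 0 ≤ y i} = ⋂ i, {y | 0 ≤ y i} := by
    ext y; simp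
  rw [this]
  exact isClosed_iInter fun i => isClosed_le continuous_const (continuous_apply i)

theorem farkas (v : m → E) (w : E)
    (h : ∀ d : E, (∀ i, 0 ≤ ⟪v i, d⟫) → 0 ≤ ⟪w, d⟫) :
    ∃ lam : m → ℝ, (∀ i, 0 ≤ lam i) ∧ ∑ i, lam i • v i = w := by
  classical
  by_contra hw
  set C : ConvexCone ℝ E :=
    { carrier := {x : E | ∃ lam : m → ℝ, (∀ i, 0 ≤ lam i) ∧ ∑ i, lam i • v i = x}
      smul_mem' := by
        rintro c hc x ⟨lam, h0, rfl⟩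
        exact ⟨fun i => c * lam i, fun i => mul_nonneg hc.le (h0 i), by
          simp [Finset.smul_sum, mul_smul]⟩
      add_mem' := by
        rintro x ⟨lam, h0, rfl⟩ y ⟨lam', h0', rfl⟩
        exact ⟨fun i => lam i + lam' i, fun i => add_nonneg (h0 i) (h0' i), by
          rw [← Finset.sum_add_distrib]
          exact Finset.sum_congr rfl fun i _ => add_smul _ _ _⟩ } with hCdef
  have hne : ((C : Set E)).Nonempty :=
    ⟨0, fun _ => 0, fun i => le_rfl, by simp⟩
  have hcl : IsClosed (C : Set E) := isClosed_conic v
  have hwC : w ∉ C := fun hmem => hw hmem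
  obtain ⟨y, hy1, hy2⟩ := ProperCone.hyperplane_separation'
    (⟨C.toPointedCone ⟨fun _ => 0, fun i => le_rfl, by simp⟩, hcl⟩ : ProperCone ℝ E) hwC
  have hvi : ∀ i, 0 ≤ ⟪v i, y⟫ := by
    intro i
    refine hy1 (v i) ⟨fun j => if j = i then 1 else 0, fun j => by positivity, by simp⟩
  have h2 := h y hvi
  rw [real_inner_comm] at h2 hy2
  linarith [hy2]

end BeurlingAux

namespace CombModFin

variable {X : Type*}

-- ===================== basic lemmas =====================

section Basic

variable {S : Finset (Set X)} {ρ σ : Set X → ℝ≥0∞} {Γ : Set (Set X)} {p : ℝ}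

lemma len_ne_top (h : ∀ s ∈ S, ρ s ≠ ∞) (K : Set X) : len S ρ K ≠ ∞ :=
  ENNReal.sum_ne_top.mpr fun s hs => h s (Finset.mem_filter.mp hs).1

lemma vol_ne_top (h : ∀ s ∈ S, ρ s ≠ ∞) (hp : 0 ≤ p) : vol S ρ p ≠ ∞ :=
  ENNReal.sum_ne_top.mpr fun s hs => ENNReal.rpow_ne_top_of_nonneg hp (h s hs)

lemma vol_ne_zero (h : ∃ s ∈ S, ρ s ≠ 0) (hp : 0 < p) : vol S ρ p ≠ 0 := by
  obtain ⟨s, hs, hρs⟩ := h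
  intro hv
  rw [vol, Finset.sum_eq_zero_iff] at hv
  have := hv s hs
  rw [ENNReal.rpow_eq_zero_iff] at this
  rcases this with ⟨h1, _⟩ | ⟨_, h2⟩
  · exact hρs h1
  · linarith

lemma Lmin_le_len {γ : Set X} (hγ : γ ∈ Γ) : Lmin S ρ Γ ≤ len S ρ γ :=
  iInf₂_le γ hγ

lemma Lmin_ne_top (hΓ : Γ.Nonempty) (h : ∀ s ∈ S, ρ s ≠ ∞) : Lmin S ρ Γ ≠ ∞ := by
  obtain ⟨γ, hγ⟩ := hΓ
  exact fun ht => len_ne_top h γ (eq_top_iff.mpr (ht ▸ Lmin_le_len hγ))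

lemma modWith_eq_vol (hL : Lmin S ρ Γ = 1) : modWith S Γ ρ p = vol S ρ p := by
  rw [modWith, hL, ENNReal.one_rpow, div_one]

lemma cmod_le_modWith (h : Admissible S ρ) : cmod S Γ p ≤ modWith S Γ ρ p :=
  iInf₂_le ρ h

lemma len_smul (c : ℝ≥0∞) (K : Set X) : len S (fun s => c * ρ s) K = c * len S ρ K := by
  rw [len, len, Finset.mul_sum]

/-- Attainment of `Lmin`: since `S` is finite, only finitely many values of `len` occur. -/
lemma exists_len_eq_Lmin (hΓ : Γ.Nonempty) : ∃ γ ∈ Γ, len S ρ γ = Lmin S ρ Γ := by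
  have hLmin : Lmin S ρ Γ = sInf ((fun γ => len S ρ γ) '' Γ) := by
    rw [sInf_image]; rfl
  have hfin : ((fun γ => len S ρ γ) '' Γ).Finite := by
    apply Set.Finite.subset (Set.Finite.image (fun T => ∑ s ∈ T, ρ s)
      (S.powerset.finite_toSet))
    rintro x ⟨γ, _, rfl⟩
    exact ⟨S.filter fun s => (s ∩ γ).Nonempty, Finset.mem_coe.mpr (Finset.mem_powerset.mpr (Finset.filter_subset _ _)), rfl⟩
  have hne : ((fun γ => len S ρ γ) '' Γ).Nonempty := hΓ.image _
  have := hne.csInf_mem hfin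
  rw [← hLmin] at this
  obtain ⟨γ, hγ, heq⟩ := this
  exact ⟨γ, hγ, heq⟩

lemma rpow_sub_one_mul (hp : 1 < p) {a : ℝ≥0∞} (ha : a ≠ ∞) :
    a ^ (p - 1) * a = a ^ p := by
  by_cases h0 : a = 0
  · rw [h0, ENNReal.zero_rpow_of_pos (by linarith), ENNReal.zero_rpow_of_pos (by linarith),
      mul_zero]
  · have : a ^ (p - 1) * a = a ^ (p - 1) * a ^ (1 : ℝ) := by rw [ENNReal.rpow_one]
    rw [this, ← ENNReal.rpow_add _ _ h0 ha, sub_add_cancel]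

/-- Young's inequality, in the form we need. -/
lemma young (hp : 1 < p) (a b : ℝ≥0∞) :
    (ENNReal.ofReal p * b ^ (p - 1)) * a ≤ a ^ p + ENNReal.ofReal (p - 1) * b ^ p := by
  have hq : p.HolderConjugate (p / (p - 1)) := Real.HolderConjugate.conjExponent hp
  have hy := ENNReal.young_inequality a (b ^ (p - 1)) hq
  have hb : (b ^ (p - 1)) ^ (p / (p - 1)) = b ^ p := by
    rw [← ENNReal.rpow_mul]
    congr 1
    rw [mul_comm]
    exact div_mul_cancel₀ p (show p - 1 ≠ 0 by linarith)
  rw [hb] at hy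
  have h1 : (ENNReal.ofReal p * b ^ (p - 1)) * a = ENNReal.ofReal p * (a * b ^ (p - 1)) := by
    ring
  rw [h1]
  calc ENNReal.ofReal p * (a * b ^ (p - 1))
      ≤ ENNReal.ofReal p * (a ^ p / ENNReal.ofReal p + b ^ p / ENNReal.ofReal (p / (p - 1))) :=
        mul_le_mul_right hy _
    _ = ENNReal.ofReal p * (a ^ p / ENNReal.ofReal p)
        + ENNReal.ofReal p * (b ^ p / ENNReal.ofReal (p / (p - 1))) := by rw [mul_add]
    _ = a ^ p + ENNReal.ofReal (p - 1) * b ^ p := by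
        congr 1
        · exact ENNReal.mul_div_cancel (by positivity) ENNReal.ofReal_ne_top
        · have hpq' : p / (p / (p - 1)) = p - 1 := by
            rw [div_div_eq_mul_div, mul_comm]
            exact mul_div_cancel_right₀ _ (show p ≠ 0 by linarith)
          rw [ENNReal.div_eq_inv_mul, ← mul_assoc,
            mul_comm (ENNReal.ofReal p) (ENNReal.ofReal (p / (p - 1)))⁻¹,
            ← ENNReal.div_eq_inv_mul,
            ← ENNReal.ofReal_div_of_pos
              (div_pos (show (0:ℝ) < p by linarith) (show (0:ℝ) < p - 1 by linarith)),
            hpq']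

/-- Exchange of summation. -/
lemma exchange (Γ₀ : Finset (Set X)) (lam : Set X → ℝ≥0∞) (τ : Set X → ℝ≥0∞) :
    ∑ γ ∈ Γ₀, lam γ * len S τ γ
      = ∑ s ∈ S, (∑ γ ∈ Γ₀.filter fun γ => (s ∩ γ).Nonempty, lam γ) * τ s := by
  simp only [len, Finset.mul_sum, Finset.sum_mul]
  exact Finset.sum_comm' (by
    intro γ s
    simp only [Finset.mem_filter]
    tauto)

end Basic

-- ===================== sufficiency =====================

section Core

variable {S : Finset (Set X)} {Γ : Set (Set X)} {p : ℝ} {ρ : Set X → ℝ≥0∞}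

lemma vol_smul (hp : 0 ≤ p) (c : ℝ≥0∞) (ρ : Set X → ℝ≥0∞) :
    vol S (fun s => c * ρ s) p = c ^ p * vol S ρ p := by
  rw [vol, vol, Finset.mul_sum]
  exact Finset.sum_congr rfl fun s _ => ENNReal.mul_rpow_of_nonneg _ _ hp

lemma sum_lam_eq (hp : 1 < p) (hρfin : ∀ s ∈ S, ρ s ≠ ∞)
    (Γ₀ : Finset (Set X)) (lam : Set X → ℝ≥0∞)
    (hlen1 : ∀ γ ∈ Γ₀, len S ρ γ = 1)
    (heq : ∀ s ∈ S, ENNReal.ofReal p * ρ s ^ (p - 1)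
      = ∑ γ ∈ Γ₀.filter fun γ => (s ∩ γ).Nonempty, lam γ) :
    ∑ γ ∈ Γ₀, lam γ = ENNReal.ofReal p * vol S ρ p := by
  calc ∑ γ ∈ Γ₀, lam γ = ∑ γ ∈ Γ₀, lam γ * len S ρ γ :=
        Finset.sum_congr rfl fun γ hγ => by rw [hlen1 γ hγ, mul_one]
    _ = ∑ s ∈ S, (∑ γ ∈ Γ₀.filter fun γ => (s ∩ γ).Nonempty, lam γ) * ρ s := exchange _ _ _
    _ = ∑ s ∈ S, ENNReal.ofReal p * ρ s ^ p := by
        refine Finset.sum_congr rfl fun s hs => ?_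
        rw [← heq s hs, mul_assoc, rpow_sub_one_mul hp (hρfin s hs)]
    _ = ENNReal.ofReal p * vol S ρ p := by rw [vol, Finset.mul_sum]

lemma vol_le_of_criterion (hp : 1 < p) (hρfin : ∀ s ∈ S, ρ s ≠ ∞)
    (Γ₀ : Finset (Set X)) (hΓ₀Γ : (↑Γ₀ : Set (Set X)) ⊆ Γ)
    (lam : Set X → ℝ≥0∞)
    (hlen1 : ∀ γ ∈ Γ₀, len S ρ γ = 1)
    (heq : ∀ s ∈ S, ENNReal.ofReal p * ρ s ^ (p - 1)
      = ∑ γ ∈ Γ₀.filter fun γ => (s ∩ γ).Nonempty, lam γ)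
    (τ : Set X → ℝ≥0∞) (hτ : ∀ γ ∈ Γ, 1 ≤ len S τ γ) :
    vol S ρ p ≤ vol S τ p := by
  have key1 : ∑ γ ∈ Γ₀, lam γ ≤ ∑ s ∈ S, (ENNReal.ofReal p * ρ s ^ (p - 1)) * τ s := by
    calc ∑ γ ∈ Γ₀, lam γ ≤ ∑ γ ∈ Γ₀, lam γ * len S τ γ := by
          refine Finset.sum_le_sum fun γ hγ => ?_
          conv_lhs => rw [← mul_one (lam γ)]
          exact mul_le_mul_right (hτ γ (hΓ₀Γ hγ)) _
      _ = ∑ s ∈ S, (∑ γ ∈ Γ₀.filter fun γ => (s ∩ γ).Nonempty, lam γ) * τ s := exchange _ _ _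
      _ = ∑ s ∈ S, (ENNReal.ofReal p * ρ s ^ (p - 1)) * τ s := by
          refine Finset.sum_congr rfl fun s hs => ?_
          rw [heq s hs]
  have key2 : ∑ s ∈ S, (ENNReal.ofReal p * ρ s ^ (p - 1)) * τ s
      ≤ vol S τ p + ENNReal.ofReal (p - 1) * vol S ρ p := by
    rw [vol, vol, Finset.mul_sum, ← Finset.sum_add_distrib]
    exact Finset.sum_le_sum fun s _ => young hp (τ s) (ρ s)
  have hsplit : ENNReal.ofReal p * vol S ρ p
      = vol S ρ p + ENNReal.ofReal (p - 1) * vol S ρ p := by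
    have h : ENNReal.ofReal p = 1 + ENNReal.ofReal (p - 1) := by
      rw [← ENNReal.ofReal_one, ← ENNReal.ofReal_add (by norm_num) (by linarith)]
      norm_num
    rw [h, add_mul, one_mul]
  have hfin : ENNReal.ofReal (p - 1) * vol S ρ p ≠ ∞ :=
    ENNReal.mul_ne_top ENNReal.ofReal_ne_top (vol_ne_top hρfin (by linarith))
  have hmain : vol S ρ p + ENNReal.ofReal (p - 1) * vol S ρ p
      ≤ vol S τ p + ENNReal.ofReal (p - 1) * vol S ρ p := by
    rw [← hsplit, ← sum_lam_eq hp hρfin Γ₀ lam hlen1 heq]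
    exact key1.trans key2
  exact (ENNReal.add_le_add_iff_right hfin).mp hmain

lemma modWith_eq_cmod_of_criterion (hp : 1 < p) (hΓne : Γ.Nonempty)
    (hρ : Admissible S ρ) (hL : Lmin S ρ Γ = 1)
    (Γ₀ : Finset (Set X)) (hΓ₀Γ : (↑Γ₀ : Set (Set X)) ⊆ Γ)
    (lam : Set X → ℝ≥0∞)
    (hlen1 : ∀ γ ∈ Γ₀, len S ρ γ = 1)
    (heq : ∀ s ∈ S, ENNReal.ofReal p * ρ s ^ (p - 1)
      = ∑ γ ∈ Γ₀.filter fun γ => (s ∩ γ).Nonempty, lam γ) :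
    modWith S Γ ρ p = cmod S Γ p := by
  refine le_antisymm (le_iInf₂ fun σ hσ => ?_) (cmod_le_modWith hρ)
  rw [modWith_eq_vol hL]
  by_cases hLσ0 : Lmin S σ Γ = 0
  · rw [modWith, hLσ0, ENNReal.zero_rpow_of_pos (by linarith),
      ENNReal.div_zero (vol_ne_zero hσ.2 (by linarith))]
    exact le_top
  · have hLσtop : Lmin S σ Γ ≠ ∞ := Lmin_ne_top hΓne hσ.1
    set c : ℝ≥0∞ := (Lmin S σ Γ)⁻¹ with hc
    have hτ : ∀ γ ∈ Γ, 1 ≤ len S (fun s => c * σ s) γ := by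
      intro γ hγ
      rw [len_smul]
      calc (1 : ℝ≥0∞) = c * Lmin S σ Γ := (ENNReal.inv_mul_cancel hLσ0 hLσtop).symm
        _ ≤ c * len S σ γ := mul_le_mul_right (Lmin_le_len hγ) _
    have hv := vol_le_of_criterion hp hρ.1 Γ₀ hΓ₀Γ lam hlen1 heq (fun s => c * σ s) hτ
    rw [modWith]
    calc vol S ρ p ≤ vol S (fun s => c * σ s) p := hv
      _ = c ^ p * vol S σ p := vol_smul (by linarith) c σ
      _ = vol S σ p / Lmin S σ Γ ^ p := by
          rw [hc, ENNReal.inv_rpow, ENNReal.div_eq_inv_mul]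

lemma cmod_formula (hp : 1 < p) (hΓne : Γ.Nonempty)
    (hρ : Admissible S ρ) (hL : Lmin S ρ Γ = 1)
    (Γ₀ : Finset (Set X)) (hΓ₀Γ : (↑Γ₀ : Set (Set X)) ⊆ Γ)
    (lam : Set X → ℝ≥0∞)
    (hlen1 : ∀ γ ∈ Γ₀, len S ρ γ = 1)
    (heq : ∀ s ∈ S, ENNReal.ofReal p * ρ s ^ (p - 1)
      = ∑ γ ∈ Γ₀.filter fun γ => (s ∩ γ).Nonempty, lam γ) :
    cmod S Γ p = (ENNReal.ofReal p)⁻¹ * ∑ γ ∈ Γ₀, lam γ := by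
  have hp0 : ENNReal.ofReal p ≠ 0 := by
    simp only [ne_eq, ENNReal.ofReal_eq_zero, not_le]; linarith
  rw [← modWith_eq_cmod_of_criterion hp hΓne hρ hL Γ₀ hΓ₀Γ lam hlen1 heq,
    modWith_eq_vol hL, sum_lam_eq hp hρ.1 Γ₀ lam hlen1 heq, ← mul_assoc,
    ENNReal.inv_mul_cancel hp0 ENNReal.ofReal_ne_top, one_mul]

end Core

-- ===================== uniqueness =====================

section Unique

variable {S : Finset (Set X)} {Γ : Set (Set X)} {p : ℝ} {ρ ρ' : Set X → ℝ≥0∞}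

lemma unique_optimal (hp : 1 < p) (hΓne : Γ.Nonempty)
    (hρ : Admissible S ρ) (hL : Lmin S ρ Γ = 1)
    (hopt : modWith S Γ ρ p = cmod S Γ p)
    (hρ' : Admissible S ρ') (hopt' : modWith S Γ ρ' p = cmod S Γ p) :
    ∃ c : ℝ≥0∞, 0 < c ∧ c ≠ ∞ ∧ ∀ s ∈ S, ρ' s = c * ρ s := by
  have hcmod : cmod S Γ p = vol S ρ p := by rw [← hopt, modWith_eq_vol hL]
  have hvolfin : vol S ρ p ≠ ∞ := vol_ne_top hρ.1 (by linarith)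
  have hcmodfin : cmod S Γ p ≠ ∞ := hcmod ▸ hvolfin
  set c : ℝ≥0∞ := Lmin S ρ' Γ with hcdef
  have hctop : c ≠ ∞ := Lmin_ne_top hΓne hρ'.1
  have hc0 : c ≠ 0 := by
    intro h0
    apply hcmodfin
    rw [← hopt', modWith, show Lmin S ρ' Γ = 0 from h0,
      ENNReal.zero_rpow_of_pos (by linarith),
      ENNReal.div_zero (vol_ne_zero hρ'.2 (by linarith))]
  set ρ'' : Set X → ℝ≥0∞ := fun s => c⁻¹ * ρ' s with hρ''def
  have hρ''fin : ∀ s ∈ S, ρ'' s ≠ ∞ :=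
    fun s hs => ENNReal.mul_ne_top (ENNReal.inv_ne_top.mpr hc0) (hρ'.1 s hs)
  have hvol'' : vol S ρ'' p = cmod S Γ p := by
    rw [hρ''def, vol_smul (by linarith : (0:ℝ) ≤ p) c⁻¹ ρ', ← hopt', modWith,
      ENNReal.inv_rpow, ENNReal.div_eq_inv_mul]
  have hlen'' : ∀ γ ∈ Γ, (1 : ℝ≥0∞) ≤ len S ρ'' γ := by
    intro γ hγ
    rw [hρ''def, len_smul]
    calc (1 : ℝ≥0∞) = c⁻¹ * c := (ENNReal.inv_mul_cancel hc0 hctop).symm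
      _ ≤ c⁻¹ * len S ρ' γ := mul_le_mul_right (Lmin_le_len hγ) _
  have hlenρ : ∀ γ ∈ Γ, (1 : ℝ≥0∞) ≤ len S ρ γ := fun γ hγ => hL ▸ Lmin_le_len hγ
  -- real-valued versions
  set a : Set X → ℝ := fun s => (ρ s).toReal with ha
  set b : Set X → ℝ := fun s => (ρ'' s).toReal with hb
  -- the midpoint metric
  set σ : Set X → ℝ≥0∞ := fun s => ENNReal.ofReal ((a s + b s) / 2) with hσ
  have hσfin : ∀ s ∈ S, σ s ≠ ∞ := fun s _ => ENNReal.ofReal_ne_top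
  have hσadm : Admissible S σ := by
    refine ⟨hσfin, ?_⟩
    obtain ⟨s₀, hs₀, hs₀0⟩ := hρ.2
    refine ⟨s₀, hs₀, ?_⟩
    have hpos : 0 < a s₀ := ENNReal.toReal_pos hs₀0 (hρ.1 s₀ hs₀)
    have hbnn : 0 ≤ b s₀ := ENNReal.toReal_nonneg
    simp only [hσ, ne_eq, ENNReal.ofReal_eq_zero, not_le]
    linarith
  have hlenσ : ∀ γ ∈ Γ, (1 : ℝ≥0∞) ≤ len S σ γ := by
    intro γ hγ
    have e1 : len S σ γ = ENNReal.ofReal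
        (∑ s ∈ S.filter fun s => (s ∩ γ).Nonempty, (a s + b s) / 2) := by
      rw [len, ENNReal.ofReal_sum_of_nonneg]
      intro s _
      positivity
    have h1 : (1:ℝ) ≤ ∑ s ∈ S.filter fun s => (s ∩ γ).Nonempty, a s := by
      have : (len S ρ γ).toReal = ∑ s ∈ S.filter fun s => (s ∩ γ).Nonempty, a s := by
        rw [len, ENNReal.toReal_sum]
        intro s hs; exact hρ.1 s (Finset.mem_filter.mp hs).1
      rw [← this]
      have := ENNReal.toReal_mono (len_ne_top hρ.1 γ) (hlenρ γ hγ)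
      simpa using this
    have h2 : (1:ℝ) ≤ ∑ s ∈ S.filter fun s => (s ∩ γ).Nonempty, b s := by
      have : (len S ρ'' γ).toReal = ∑ s ∈ S.filter fun s => (s ∩ γ).Nonempty, b s := by
        rw [len, ENNReal.toReal_sum]
        intro s hs; exact hρ''fin s (Finset.mem_filter.mp hs).1
      rw [← this]
      have := ENNReal.toReal_mono (len_ne_top hρ''fin γ) (hlen'' γ hγ)
      simpa using this
    rw [e1]
    have h3 : (1:ℝ) ≤ ∑ s ∈ S.filter fun s => (s ∩ γ).Nonempty, (a s + b s) / 2 := by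
      rw [← Finset.sum_div, Finset.sum_add_distrib]
      linarith
    calc (1:ℝ≥0∞) = ENNReal.ofReal 1 := ENNReal.ofReal_one.symm
      _ ≤ _ := ENNReal.ofReal_le_ofReal h3
  -- cmod ≤ vol σ
  have hcmodσ : cmod S Γ p ≤ vol S σ p := by
    have h1 : cmod S Γ p ≤ modWith S Γ σ p := cmod_le_modWith hσadm
    have h2 : (1 : ℝ≥0∞) ≤ Lmin S σ Γ ^ p := by
      have : (1 : ℝ≥0∞) ≤ Lmin S σ Γ := le_iInf₂ hlenσ
      calc (1:ℝ≥0∞) = 1 ^ p := (ENNReal.one_rpow p).symm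
        _ ≤ Lmin S σ Γ ^ p := ENNReal.rpow_le_rpow this (by linarith)
    calc cmod S Γ p ≤ vol S σ p / Lmin S σ Γ ^ p := h1
      _ ≤ vol S σ p / 1 := ENNReal.div_le_div_left h2 _
      _ = vol S σ p := div_one _
  -- translate to the reals
  have hvolσ : vol S σ p = ENNReal.ofReal (∑ s ∈ S, ((a s + b s) / 2) ^ p) := by
    rw [vol, ENNReal.ofReal_sum_of_nonneg (fun s _ => by positivity)]
    refine Finset.sum_congr rfl fun s _ => ?_
    rw [hσ, ENNReal.ofReal_rpow_of_nonneg (by positivity) (by linarith)]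
  have hvola : vol S ρ p = ENNReal.ofReal (∑ s ∈ S, a s ^ p) := by
    rw [vol, ENNReal.ofReal_sum_of_nonneg (fun s _ => by positivity)]
    refine Finset.sum_congr rfl fun s hs => ?_
    rw [← ENNReal.ofReal_rpow_of_nonneg ENNReal.toReal_nonneg (by linarith : (0:ℝ) ≤ p),
      ENNReal.ofReal_toReal (hρ.1 s hs)]
  have hvolb : vol S ρ'' p = ENNReal.ofReal (∑ s ∈ S, b s ^ p) := by
    rw [vol, ENNReal.ofReal_sum_of_nonneg (fun s _ => by positivity)]
    refine Finset.sum_congr rfl fun s hs => ?_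
    rw [← ENNReal.ofReal_rpow_of_nonneg ENNReal.toReal_nonneg (by linarith : (0:ℝ) ≤ p),
      ENNReal.ofReal_toReal (hρ''fin s hs)]
  have hsum_ab : ∑ s ∈ S, a s ^ p = ∑ s ∈ S, b s ^ p := by
    have := hvol''.trans hcmod
    rw [hvolb, hvola] at this
    exact (ENNReal.ofReal_eq_ofReal_iff (by positivity) (by positivity)).mp this |>.symm
  have hmid_ge : ∑ s ∈ S, a s ^ p ≤ ∑ s ∈ S, ((a s + b s) / 2) ^ p := by
    have h := hcmodσ
    rw [hcmod, hvola, hvolσ] at h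
    exact (ENNReal.ofReal_le_ofReal_iff (by positivity)).mp h
  -- pointwise convexity
  have hconv : ∀ s ∈ S, ((a s + b s) / 2) ^ p ≤ (a s ^ p + b s ^ p) / 2 := by
    intro s _
    have h := (strictConvexOn_rpow hp).convexOn.2 (mem_Ici.mpr (ENNReal.toReal_nonneg : (0:ℝ) ≤ a s))
      (mem_Ici.mpr (ENNReal.toReal_nonneg : (0:ℝ) ≤ b s))
      (by norm_num : (0:ℝ) ≤ 1/2) (by norm_num : (0:ℝ) ≤ 1/2) (by norm_num)
    simp only [smul_eq_mul] at h
    calc ((a s + b s) / 2) ^ p = (1/2 * a s + 1/2 * b s) ^ p := by ring_nf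
      _ ≤ 1/2 * a s ^ p + 1/2 * b s ^ p := h
      _ = (a s ^ p + b s ^ p) / 2 := by ring
  -- equality of a and b on S
  have hab : ∀ s ∈ S, a s = b s := by
    by_contra hne
    push_neg at hne
    obtain ⟨s₁, hs₁, hs₁ne⟩ := hne
    have hstrict : ((a s₁ + b s₁) / 2) ^ p < (a s₁ ^ p + b s₁ ^ p) / 2 := by
      have h := (strictConvexOn_rpow hp).2 (mem_Ici.mpr (ENNReal.toReal_nonneg : (0:ℝ) ≤ a s₁))
        (mem_Ici.mpr (ENNReal.toReal_nonneg : (0:ℝ) ≤ b s₁)) hs₁ne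
        (by norm_num : (0:ℝ) < 1/2) (by norm_num : (0:ℝ) < 1/2) (by norm_num)
      simp only [smul_eq_mul] at h
      calc ((a s₁ + b s₁) / 2) ^ p = (1/2 * a s₁ + 1/2 * b s₁) ^ p := by ring_nf
        _ < 1/2 * a s₁ ^ p + 1/2 * b s₁ ^ p := h
        _ = (a s₁ ^ p + b s₁ ^ p) / 2 := by ring
    have hlt : ∑ s ∈ S, ((a s + b s) / 2) ^ p < ∑ s ∈ S, (a s ^ p + b s ^ p) / 2 :=
      Finset.sum_lt_sum hconv ⟨s₁, hs₁, hstrict⟩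
    have heqsum : ∑ s ∈ S, (a s ^ p + b s ^ p) / 2 = ∑ s ∈ S, a s ^ p := by
      rw [← Finset.sum_div, Finset.sum_add_distrib, ← hsum_ab]
      ring
    rw [heqsum] at hlt
    linarith [hmid_ge.trans_lt hlt]
  refine ⟨c, pos_iff_ne_zero.mpr hc0, hctop, fun s hs => ?_⟩
  have h1 : ρ'' s = ρ s := by
    have := hab s hs
    exact (ENNReal.toReal_eq_toReal_iff' (hρ''fin s hs) (hρ.1 s hs)).mp this.symm
  calc ρ' s = c * (c⁻¹ * ρ' s) := by
        rw [← mul_assoc, ENNReal.mul_inv_cancel hc0 hctop, one_mul]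
    _ = c * ρ'' s := rfl
    _ = c * ρ s := by rw [h1]

end Unique


section Necessity

variable {S : Finset (Set X)} {Γ : Set (Set X)} {p : ℝ} {ρ : Set X → ℝ≥0∞}

set_option maxHeartbeats 1000000 in
lemma criterion_of_opt (hp : 1 < p) (hΓne : Γ.Nonempty)
    (hρ : Admissible S ρ) (hL : Lmin S ρ Γ = 1)
    (hopt : modWith S Γ ρ p = cmod S Γ p) :
    ∃ Γ₀ : Finset (Set X), (↑Γ₀ : Set (Set X)) ⊆ Γ ∧ Γ₀.Nonempty ∧
      ∃ lam : Set X → ℝ≥0∞, (∀ γ ∈ Γ₀, lam γ ≠ ∞) ∧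
        (∀ γ ∈ Γ₀, len S ρ γ = 1) ∧
        (∀ s ∈ S, ENNReal.ofReal p * ρ s ^ (p - 1)
            = ∑ γ ∈ Γ₀.filter fun γ => (s ∩ γ).Nonempty, lam γ) := by
  classical
  have hp0 : (0:ℝ) < p := by linarith
  have hρfin := hρ.1
  set rr : Set X → ℝ := fun s => (ρ s).toReal with hrr
  set ActiveT : Finset (Finset (Set X)) := S.powerset.filter
    (fun T => (∃ γ ∈ Γ, S.filter (fun s => (s ∩ γ).Nonempty) = T) ∧ ∑ s ∈ T, ρ s = 1)
    with hAT
  have hmemAT : ∀ {T : Finset (Set X)}, T ∈ ActiveT →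
      T ⊆ S ∧ (∃ γ ∈ Γ, S.filter (fun s => (s ∩ γ).Nonempty) = T) ∧ ∑ s ∈ T, ρ s = 1 := by
    intro T hT
    rw [hAT, Finset.mem_filter] at hT
    exact ⟨Finset.mem_powerset.mp hT.1, hT.2.1, hT.2.2⟩
  have hmemAT' : ∀ {T : Finset (Set X)}, T ⊆ S →
      (∃ γ ∈ Γ, S.filter (fun s => (s ∩ γ).Nonempty) = T) → (∑ s ∈ T, ρ s = 1) →
      T ∈ ActiveT := by
    intro T h1 h2 h3
    rw [hAT, Finset.mem_filter]
    exact ⟨Finset.mem_powerset.mpr h1, h2, h3⟩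
  -- ActiveT is nonempty
  obtain ⟨γ₁, hγ₁Γ, hγ₁len⟩ := exists_len_eq_Lmin (ρ := ρ) hΓne
  have hγ₁1 : len S ρ γ₁ = 1 := by rw [hγ₁len, hL]
  have hT₁ : S.filter (fun s => (s ∩ γ₁).Nonempty) ∈ ActiveT :=
    hmemAT' (Finset.filter_subset _ _) ⟨γ₁, hγ₁Γ, rfl⟩ hγ₁1
  haveI : Nonempty {T // T ∈ ActiveT} := ⟨⟨_, hT₁⟩⟩
  -- generators
  set v : ({T // T ∈ ActiveT} ⊕ {i : {s // s ∈ S} // ρ (i : Set X) = 0}) →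
      EuclideanSpace ℝ {s // s ∈ S} :=
    Sum.elim (fun a => WithLp.toLp 2 fun i => if (i : Set X) ∈ (a : Finset (Set X)) then 1 else 0)
      (fun b => WithLp.toLp 2 fun i => if i = b.1 then 1 else 0) with hv
  set w : EuclideanSpace ℝ {s // s ∈ S} := WithLp.toLp 2 fun i => p * rr (i : Set X) ^ (p - 1) with hw
  have hcmod : cmod S Γ p = vol S ρ p := by rw [← hopt, modWith_eq_vol hL]
  -- Farkas hypothesis via the variational argument
  have hFar : ∀ d : EuclideanSpace ℝ {s // s ∈ S},
      (∀ j, 0 ≤ ⟪v j, d⟫) → 0 ≤ ⟪w, d⟫ := by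
    intro d hd
    set dd : Set X → ℝ := fun s => if h : s ∈ S then d ⟨s, h⟩ else 0 with hdd
    have hddval : ∀ i : {s // s ∈ S}, dd (i : Set X) = d i := by
      intro i; simp [hdd, i.2]
    have hgen1 : ∀ T ∈ ActiveT, 0 ≤ ∑ s ∈ T, dd s := by
      intro T hT
      have h1 := hd (Sum.inl ⟨T, hT⟩)
      have h2 : ⟪v (Sum.inl ⟨T, hT⟩), d⟫
          = ∑ i : {s // s ∈ S}, (if (i : Set X) ∈ T then 1 else 0) * d i := by
        simp [hv, PiLp.inner_apply, RCLike.inner_apply, conj_trivial]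
      rw [h2] at h1
      have h3 : ∑ i : {s // s ∈ S}, (if (i : Set X) ∈ T then 1 else 0) * d i
          = ∑ s ∈ S, (if s ∈ T then 1 else 0) * dd s := by
        rw [← Finset.sum_coe_sort S (fun s => (if s ∈ T then 1 else 0) * dd s)]
        exact Finset.sum_congr rfl fun i _ => by rw [hddval]
      rw [h3] at h1
      calc (0:ℝ) ≤ ∑ s ∈ S, (if s ∈ T then 1 else 0) * dd s := h1
        _ = ∑ s ∈ S.filter (fun s => s ∈ T), dd s := by
            rw [Finset.sum_filter]
            exact Finset.sum_congr rfl fun s _ => by split <;> simp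
        _ = ∑ s ∈ T, dd s := by
            rw [Finset.filter_mem_eq_inter, Finset.inter_eq_right.mpr ((hmemAT hT).1)]
    have hgen2 : ∀ s ∈ S, ρ s = 0 → 0 ≤ dd s := by
      intro s hs h0
      have h1 := hd (Sum.inr ⟨⟨s, hs⟩, h0⟩)
      have h2 : ⟪v (Sum.inr ⟨⟨s, hs⟩, h0⟩), d⟫ = d ⟨s, hs⟩ := by
        simp [hv, PiLp.inner_apply, RCLike.inner_apply, conj_trivial]
      rw [h2] at h1
      rw [show dd s = d ⟨s, hs⟩ from by simp [hdd, hs]]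
      exact h1
    set Dd : ℝ := 1 + ∑ s ∈ S, |dd s| with hDd
    have hDdpos : 0 < Dd := by
      have : 0 ≤ ∑ s ∈ S, |dd s| := Finset.sum_nonneg fun s _ => abs_nonneg _
      rw [hDd]; linarith
    set B : Finset (Finset (Set X)) := S.powerset.filter
      (fun T => (∃ γ ∈ Γ, S.filter (fun s => (s ∩ γ).Nonempty) = T) ∧ ∑ s ∈ T, ρ s ≠ 1)
      with hB
    have hBgt : ∀ T ∈ B, 1 < (∑ s ∈ T, ρ s).toReal := by
      intro T hT
      rw [hB, Finset.mem_filter] at hT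
      obtain ⟨hTpow, ⟨γ, hγΓ, hfil⟩, hne1⟩ := hT
      have hTS : T ⊆ S := Finset.mem_powerset.mp hTpow
      have hlenγ : len S ρ γ = ∑ s ∈ T, ρ s := by rw [len, hfil]
      have hfin : (∑ s ∈ T, ρ s) ≠ ∞ :=
        ENNReal.sum_ne_top.mpr fun s hs => hρfin s (hTS hs)
      have hge : (1:ℝ≥0∞) ≤ ∑ s ∈ T, ρ s := by
        rw [← hlenγ, ← hL]; exact Lmin_le_len hγΓ
      have hlt : (1:ℝ≥0∞) < ∑ s ∈ T, ρ s := lt_of_le_of_ne hge (Ne.symm hne1)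
      have := ENNReal.toReal_strict_mono hfin hlt
      simpa using this
    set δset : Finset ℝ := insert 1 (B.image fun T => (∑ s ∈ T, ρ s).toReal - 1) with hδset
    have hδne : δset.Nonempty := ⟨1, Finset.mem_insert_self _ _⟩
    set δ : ℝ := δset.min' hδne with hδ
    have hδall : ∀ x ∈ δset, 0 < x := by
      intro x hx
      rw [hδset] at hx
      rcases Finset.mem_insert.mp hx with rfl | hx
      · norm_num
      · obtain ⟨T, hT, rfl⟩ := Finset.mem_image.mp hx
        linarith [hBgt T hT]
    have hδpos : 0 < δ := hδall _ (Finset.min'_mem _ _)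
    have hδle : ∀ T ∈ B, δ ≤ (∑ s ∈ T, ρ s).toReal - 1 := by
      intro T hT
      apply Finset.min'_le
      rw [hδset]
      exact Finset.mem_insert_of_mem (Finset.mem_image_of_mem _ hT)
    set εset : Finset ℝ := insert (δ / Dd)
      ((S.filter fun s => dd s < 0).image fun s => rr s / (-(dd s))) with hεset
    have hεne : εset.Nonempty := ⟨δ / Dd, Finset.mem_insert_self _ _⟩
    set ε : ℝ := εset.min' hεne with hε
    have hεall : ∀ x ∈ εset, 0 < x := by
      intro x hx
      rw [hεset] at hx
      rcases Finset.mem_insert.mp hx with rfl | hx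
      · positivity
      · obtain ⟨s, hsmem, rfl⟩ := Finset.mem_image.mp hx
        obtain ⟨hsS, hsneg⟩ := Finset.mem_filter.mp hsmem
        have hρs : ρ s ≠ 0 := by
          intro h0
          have := hgen2 s hsS h0
          linarith
        have h1 : 0 < rr s := ENNReal.toReal_pos hρs (hρfin s hsS)
        exact div_pos h1 (by linarith)
    have hεpos : 0 < ε := hεall _ (Finset.min'_mem _ _)
    have hεδ : ε ≤ δ / Dd := Finset.min'_le _ _ (by rw [hεset]; exact Finset.mem_insert_self _ _)
    have hεneg : ∀ s ∈ S, dd s < 0 → ε ≤ rr s / (-(dd s)) := by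
      intro s hs hneg
      apply Finset.min'_le
      rw [hεset]
      exact Finset.mem_insert_of_mem
        (Finset.mem_image_of_mem _ (Finset.mem_filter.mpr ⟨hs, hneg⟩))
    set f : ℝ → ℝ := fun u => ∑ s ∈ S, (rr s + u * dd s) ^ p with hf
    have hmono : ∀ t, 0 < t → t < ε → f 0 ≤ f t := by
      intro t ht0 htε
      have hnn : ∀ s ∈ S, 0 ≤ rr s + t * dd s := by
        intro s hs
        rcases lt_or_ge (dd s) 0 with hneg | hpos
        · have h1 : t < rr s / (-(dd s)) := lt_of_lt_of_le htε (hεneg s hs hneg)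
          rw [lt_div_iff₀ (by linarith)] at h1
          nlinarith
        · have : 0 ≤ rr s := ENNReal.toReal_nonneg
          nlinarith
      set σt : Set X → ℝ≥0∞ := fun s => ENNReal.ofReal (rr s + t * dd s) with hσt
      have hσtfin : ∀ s ∈ S, σt s ≠ ∞ := fun s _ => ENNReal.ofReal_ne_top
      have hσtadm : Admissible S σt := by
        refine ⟨hσtfin, ?_⟩
        obtain ⟨s₁, hs₁, hs₁0⟩ := hρ.2
        refine ⟨s₁, hs₁, ?_⟩
        have h1 : 0 < rr s₁ := ENNReal.toReal_pos hs₁0 (hρfin s₁ hs₁)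
        have h2 : 0 < rr s₁ + t * dd s₁ := by
          rcases lt_or_ge (dd s₁) 0 with hneg | hpos
          · have h3 : t < rr s₁ / (-(dd s₁)) := lt_of_lt_of_le htε (hεneg s₁ hs₁ hneg)
            rw [lt_div_iff₀ (by linarith)] at h3
            nlinarith
          · nlinarith
        simp only [hσt, ne_eq, ENNReal.ofReal_eq_zero, not_le]
        exact h2
      have hlent : ∀ γ ∈ Γ, (1:ℝ≥0∞) ≤ len S σt γ := by
        intro γ hγ
        have hFS : (S.filter fun s => (s ∩ γ).Nonempty) ⊆ S := Finset.filter_subset _ _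
        have e1 : len S σt γ = ENNReal.ofReal
            (∑ s ∈ S.filter fun s => (s ∩ γ).Nonempty, (rr s + t * dd s)) := by
          rw [len, ENNReal.ofReal_sum_of_nonneg (fun s hs => hnn s (hFS hs))]
        have hsplitF : ∑ s ∈ S.filter (fun s => (s ∩ γ).Nonempty), (rr s + t * dd s)
            = (∑ s ∈ S.filter (fun s => (s ∩ γ).Nonempty), rr s)
              + t * ∑ s ∈ S.filter (fun s => (s ∩ γ).Nonempty), dd s := by
          rw [Finset.sum_add_distrib, Finset.mul_sum]
        have hrrF : ∑ s ∈ S.filter (fun s => (s ∩ γ).Nonempty), rr s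
            = (∑ s ∈ S.filter (fun s => (s ∩ γ).Nonempty), ρ s).toReal := by
          rw [ENNReal.toReal_sum (fun s hs => hρfin s (hFS hs))]
        have h1r : (1:ℝ) ≤ ∑ s ∈ S.filter fun s => (s ∩ γ).Nonempty, (rr s + t * dd s) := by
          by_cases hact : ∑ s ∈ S.filter (fun s => (s ∩ γ).Nonempty), ρ s = 1
          · have hFA : S.filter (fun s => (s ∩ γ).Nonempty) ∈ ActiveT :=
              hmemAT' hFS ⟨γ, hγ, rfl⟩ hact
            have h2 := hgen1 _ hFA
            have h3 : ∑ s ∈ S.filter (fun s => (s ∩ γ).Nonempty), rr s = 1 := by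
              rw [hrrF, hact]; simp
            rw [hsplitF, h3]
            nlinarith
          · have hFB : S.filter (fun s => (s ∩ γ).Nonempty) ∈ B := by
              rw [hB, Finset.mem_filter]
              exact ⟨Finset.mem_powerset.mpr hFS, ⟨γ, hγ, rfl⟩, hact⟩
            have h2 : 1 + δ ≤ ∑ s ∈ S.filter (fun s => (s ∩ γ).Nonempty), rr s := by
              have := hδle _ hFB
              rw [hrrF]; linarith
            have habs : |∑ s ∈ S.filter (fun s => (s ∩ γ).Nonempty), dd s| ≤ Dd := by
              calc |∑ s ∈ S.filter (fun s => (s ∩ γ).Nonempty), dd s|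
                  ≤ ∑ s ∈ S.filter (fun s => (s ∩ γ).Nonempty), |dd s| :=
                    Finset.abs_sum_le_sum_abs _ _
                _ ≤ ∑ s ∈ S, |dd s| := Finset.sum_le_sum_of_subset_of_nonneg hFS
                    (fun s _ _ => abs_nonneg _)
                _ ≤ Dd := by rw [hDd]; linarith
            have h4 : -δ ≤ t * ∑ s ∈ S.filter (fun s => (s ∩ γ).Nonempty), dd s := by
              have h5 : t * |∑ s ∈ S.filter (fun s => (s ∩ γ).Nonempty), dd s|
                  ≤ (δ / Dd) * Dd := by
                apply mul_le_mul (le_of_lt (lt_of_lt_of_le htε hεδ)) habs (abs_nonneg _)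
                positivity
              rw [div_mul_cancel₀ _ hDdpos.ne'] at h5
              have h6 := neg_abs_le (∑ s ∈ S.filter (fun s => (s ∩ γ).Nonempty), dd s)
              nlinarith [abs_nonneg (∑ s ∈ S.filter (fun s => (s ∩ γ).Nonempty), dd s)]
            rw [hsplitF]
            linarith
        rw [e1]
        calc (1:ℝ≥0∞) = ENNReal.ofReal 1 := ENNReal.ofReal_one.symm
          _ ≤ _ := ENNReal.ofReal_le_ofReal h1r
      have hvolle : vol S ρ p ≤ vol S σt p := by
        have h1 : cmod S Γ p ≤ modWith S Γ σt p := cmod_le_modWith hσtadm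
        have h2 : (1:ℝ≥0∞) ≤ Lmin S σt Γ ^ p := by
          have h3 : (1:ℝ≥0∞) ≤ Lmin S σt Γ := le_iInf₂ hlent
          calc (1:ℝ≥0∞) = 1 ^ p := (ENNReal.one_rpow p).symm
            _ ≤ _ := ENNReal.rpow_le_rpow h3 (by linarith)
        calc vol S ρ p = cmod S Γ p := hcmod.symm
          _ ≤ vol S σt p / Lmin S σt Γ ^ p := h1
          _ ≤ vol S σt p / 1 := ENNReal.div_le_div_left h2 _
          _ = vol S σt p := div_one _
      have hf0 : vol S ρ p = ENNReal.ofReal (f 0) := by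
        rw [vol, hf]
        simp only [zero_mul, add_zero]
        rw [ENNReal.ofReal_sum_of_nonneg (fun s _ => Real.rpow_nonneg ENNReal.toReal_nonneg p)]
        refine Finset.sum_congr rfl fun s hs => ?_
        rw [← ENNReal.ofReal_rpow_of_nonneg ENNReal.toReal_nonneg (le_of_lt hp0),
          ENNReal.ofReal_toReal (hρfin s hs)]
      have hft : vol S σt p = ENNReal.ofReal (f t) := by
        rw [vol, hf, ENNReal.ofReal_sum_of_nonneg (fun s hs => Real.rpow_nonneg (hnn s hs) p)]
        refine Finset.sum_congr rfl fun s hs => ?_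
        rw [hσt, ENNReal.ofReal_rpow_of_nonneg (hnn s hs) (le_of_lt hp0)]
      have h7 := hvolle
      rw [hf0, hft] at h7
      exact (ENNReal.ofReal_le_ofReal_iff
        (Finset.sum_nonneg fun s hs => Real.rpow_nonneg (hnn s hs) p)).mp h7
    have hderiv : HasDerivAt f (∑ s ∈ S, p * rr s ^ (p - 1) * dd s) 0 := by
      rw [hf]
      apply HasDerivAt.fun_sum
      intro s _
      have h1 : HasDerivAt (fun u : ℝ => rr s + u * dd s) (dd s) 0 := by
        simpa using ((hasDerivAt_id (0:ℝ)).mul_const (dd s)).const_add (rr s)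
      have h2' : HasDerivAt (fun x : ℝ => x ^ p) (p * rr s ^ (p - 1)) (rr s + 0 * dd s) := by
        rw [show rr s + 0 * dd s = rr s from by ring]
        exact Real.hasDerivAt_rpow_const (Or.inr hp.le)
      have h3 := h2'.comp 0 h1
      exact h3
    have hd0 : 0 ≤ ∑ s ∈ S, p * rr s ^ (p - 1) * dd s := by
      have hsl := hasDerivWithinAt_iff_tendsto_slope.mp
        (hderiv.hasDerivWithinAt (s := Ioi (0:ℝ)))
      have hset : (Ioi (0:ℝ)) \ {0} = Ioi 0 :=
        diff_singleton_eq_self (fun h => lt_irrefl (0:ℝ) (mem_Ioi.mp h))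
      rw [hset] at hsl
      refine ge_of_tendsto hsl ?_
      filter_upwards [Ioo_mem_nhdsGT_of_mem (show (0:ℝ) ∈ Ico 0 ε from ⟨le_refl _, hεpos⟩)]
        with t ht
      rw [slope_def_field]
      apply div_nonneg
      · have := hmono t ht.1 ht.2; linarith
      · linarith [ht.1]
    have hwinner : ⟪w, d⟫ = ∑ s ∈ S, p * rr s ^ (p - 1) * dd s := by
      have h1 : ⟪w, d⟫ = ∑ i : {s // s ∈ S}, p * rr (i : Set X) ^ (p - 1) * d i := by
        simp [hw, PiLp.inner_apply, RCLike.inner_apply, conj_trivial, mul_comm]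
      rw [h1, ← Finset.sum_coe_sort S (fun s => p * rr s ^ (p - 1) * dd s)]
      exact Finset.sum_congr rfl fun i _ => by rw [hddval]
    rw [hwinner]
    exact hd0
  -- apply Farkas
  obtain ⟨lamF, hlamF0, hlamFsum⟩ := BeurlingAux.farkas v w hFar
  -- construct the subfamily and the multipliers
  set gam : {T // T ∈ ActiveT} → Set X := fun a =>
    Classical.choose (hmemAT a.2).2.1 with hgamdef
  have hgam : ∀ a : {T // T ∈ ActiveT},
      gam a ∈ Γ ∧ S.filter (fun s => (s ∩ gam a).Nonempty) = (a : Finset (Set X)) := by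
    intro a
    have h := Classical.choose_spec (hmemAT a.2).2.1
    exact ⟨h.1, h.2⟩
  set Γ₀ : Finset (Set X) := Finset.univ.image gam with hΓ₀
  have hginj : Function.Injective gam := by
    intro a b hab
    apply Subtype.ext
    rw [← (hgam a).2, ← (hgam b).2, hab]
  have hΓ₀Γ : (↑Γ₀ : Set (Set X)) ⊆ Γ := by
    intro γ hγ
    rw [hΓ₀] at hγ
    simp only [Finset.coe_image, Set.mem_image] at hγ
    obtain ⟨a, _, rfl⟩ := hγ
    exact (hgam a).1
  have hΓ₀ne : Γ₀.Nonempty :=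
    ⟨gam ⟨_, hT₁⟩, by rw [hΓ₀]; exact Finset.mem_image_of_mem _ (Finset.mem_univ _)⟩
  have hlen1 : ∀ γ ∈ Γ₀, len S ρ γ = 1 := by
    intro γ hγ
    rw [hΓ₀, Finset.mem_image] at hγ
    obtain ⟨a, _, rfl⟩ := hγ
    have h1 : len S ρ (gam a) = ∑ s ∈ (a : Finset (Set X)), ρ s := by
      rw [len, (hgam a).2]
    rw [h1]
    exact (hmemAT a.2).2.2
  set lam : Set X → ℝ≥0∞ := fun γ =>
    if h : S.filter (fun s => (s ∩ γ).Nonempty) ∈ ActiveT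
    then ENNReal.ofReal (lamF (Sum.inl ⟨_, h⟩)) else 0 with hlam
  have hlamval : ∀ a : {T // T ∈ ActiveT},
      lam (gam a) = ENNReal.ofReal (lamF (Sum.inl a)) := by
    intro a
    have h1 : S.filter (fun s => (s ∩ gam a).Nonempty) = (a : Finset (Set X)) := (hgam a).2
    have h2 : S.filter (fun s => (s ∩ gam a).Nonempty) ∈ ActiveT := by rw [h1]; exact a.2
    simp only [hlam]
    rw [dif_pos h2]
    have h3 : (⟨S.filter (fun s => (s ∩ gam a).Nonempty), h2⟩ : {T // T ∈ ActiveT}) = a :=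
      Subtype.ext h1
    rw [h3]
  have hlamtop : ∀ γ ∈ Γ₀, lam γ ≠ ∞ := by
    intro γ _
    simp only [hlam]
    split
    · exact ENNReal.ofReal_ne_top
    · exact ENNReal.zero_ne_top
  -- the main identity
  have hmain : ∀ s ∈ S, ENNReal.ofReal p * ρ s ^ (p - 1)
      = ∑ γ ∈ Γ₀.filter fun γ => (s ∩ γ).Nonempty, lam γ := by
    intro s hs
    -- coordinate identity from Farkas
    have h1 : w ⟨s, hs⟩ = ∑ j, lamF j * v j ⟨s, hs⟩ := by
      rw [← hlamFsum]
      rw [WithLp.ofLp_sum, Finset.sum_apply (⟨s, hs⟩ : {s // s ∈ S}) Finset.univ (fun j => lamF j • v j)]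
      exact Finset.sum_congr rfl fun j _ => rfl
    have h2 : ∑ j, lamF j * v j ⟨s, hs⟩
        = (∑ a : {T // T ∈ ActiveT},
            lamF (Sum.inl a) * (if s ∈ (a : Finset (Set X)) then 1 else 0))
          + ∑ b : {i : {s // s ∈ S} // ρ (i : Set X) = 0},
              lamF (Sum.inr b) * (if (⟨s, hs⟩ : {s // s ∈ S}) = b.1 then 1 else 0) := by
      rw [Fintype.sum_sum_type (fun j => lamF j * v j ⟨s, hs⟩)]
      rfl
    have hA0 : 0 ≤ ∑ a : {T // T ∈ ActiveT},
        lamF (Sum.inl a) * (if s ∈ (a : Finset (Set X)) then 1 else 0) := by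
      apply Finset.sum_nonneg
      intro a _
      have := hlamF0 (Sum.inl a)
      split <;> simp <;> linarith
    have hZ0 : 0 ≤ ∑ b : {i : {s // s ∈ S} // ρ (i : Set X) = 0},
        lamF (Sum.inr b) * (if (⟨s, hs⟩ : {s // s ∈ S}) = b.1 then 1 else 0) := by
      apply Finset.sum_nonneg
      intro b _
      have := hlamF0 (Sum.inr b)
      split <;> simp <;> linarith
    -- the RHS of the goal in terms of lamF
    have hmemiff : ∀ a : {T // T ∈ ActiveT},
        (s ∩ gam a).Nonempty ↔ s ∈ (a : Finset (Set X)) := by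
      intro a
      rw [← (hgam a).2, Finset.mem_filter]
      exact ⟨fun h => ⟨hs, h⟩, fun h => h.2⟩
    have hRHS : ∑ γ ∈ Γ₀.filter (fun γ => (s ∩ γ).Nonempty), lam γ
        = ENNReal.ofReal (∑ a : {T // T ∈ ActiveT},
            lamF (Sum.inl a) * (if s ∈ (a : Finset (Set X)) then 1 else 0)) := by
      rw [hΓ₀, Finset.filter_image, Finset.sum_image (fun a _ b _ h => hginj h)]
      have e1 : ∑ a ∈ Finset.univ.filter (fun a : {T // T ∈ ActiveT} => (s ∩ gam a).Nonempty),
          lam (gam a)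
          = ∑ a ∈ Finset.univ.filter
              (fun a : {T // T ∈ ActiveT} => s ∈ (a : Finset (Set X))),
              ENNReal.ofReal (lamF (Sum.inl a)) := by
        rw [show Finset.univ.filter (fun a : {T // T ∈ ActiveT} => (s ∩ gam a).Nonempty)
            = Finset.univ.filter (fun a : {T // T ∈ ActiveT} => s ∈ (a : Finset (Set X)))
          from Finset.ext fun a => by simp [hmemiff a]]
        exact Finset.sum_congr rfl fun a _ => hlamval a
      rw [e1, ← ENNReal.ofReal_sum_of_nonneg (fun a _ => hlamF0 (Sum.inl a))]
      congr 1
      rw [Finset.sum_filter]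
      exact Finset.sum_congr rfl fun a _ => by split <;> simp
    by_cases hρs : ρ s = 0
    · -- both sides are zero
      have hLHS0 : w ⟨s, hs⟩ = 0 := by
        simp only [hw]
        rw [show rr s = 0 from by simp [hrr, hρs]]
        rw [Real.zero_rpow (show p - 1 ≠ 0 by linarith), mul_zero]
      have hAZ : (∑ a : {T // T ∈ ActiveT},
          lamF (Sum.inl a) * (if s ∈ (a : Finset (Set X)) then 1 else 0))
          + (∑ b : {i : {s // s ∈ S} // ρ (i : Set X) = 0},
              lamF (Sum.inr b) * (if (⟨s, hs⟩ : {s // s ∈ S}) = b.1 then 1 else 0)) = 0 := by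
        rw [← h2, ← h1, hLHS0]
      have hAzero : ∑ a : {T // T ∈ ActiveT},
          lamF (Sum.inl a) * (if s ∈ (a : Finset (Set X)) then 1 else 0) = 0 := by
        linarith
      rw [hRHS, hAzero, ENNReal.ofReal_zero, hρs,
        ENNReal.zero_rpow_of_pos (by linarith), mul_zero]
    · -- ρ s ≠ 0
      have hZzero : ∑ b : {i : {s // s ∈ S} // ρ (i : Set X) = 0},
          lamF (Sum.inr b) * (if (⟨s, hs⟩ : {s // s ∈ S}) = b.1 then 1 else 0) = 0 := by
        apply Finset.sum_eq_zero
        intro b _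
        have : ¬((⟨s, hs⟩ : {s // s ∈ S}) = b.1) := by
          intro h
          apply hρs
          have := b.2
          rw [← h] at this
          exact this
        rw [if_neg this, mul_zero]
      have hkey : p * rr s ^ (p - 1) = ∑ a : {T // T ∈ ActiveT},
          lamF (Sum.inl a) * (if s ∈ (a : Finset (Set X)) then 1 else 0) := by
        have := h1.trans h2
        rw [hZzero, add_zero] at this
        exact this
      have hLHS : ENNReal.ofReal p * ρ s ^ (p - 1)
          = ENNReal.ofReal (p * rr s ^ (p - 1)) := by
        have e1 : ρ s ^ (p - 1) = ENNReal.ofReal (rr s ^ (p - 1)) := by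
          rw [← ENNReal.ofReal_rpow_of_nonneg ENNReal.toReal_nonneg
            (show (0:ℝ) ≤ p - 1 by linarith)]
          rw [show ENNReal.ofReal (rr s) = ρ s from ENNReal.ofReal_toReal (hρfin s hs)]
        rw [e1, ← ENNReal.ofReal_mul (le_of_lt hp0)]
      rw [hLHS, hRHS, hkey]
  exact ⟨Γ₀, hΓ₀Γ, hΓ₀ne, lam, hlamtop, hlen1, hmain⟩

end Necessity

end CombModFin

open CombModFin

/-- Combinatorial Beurling criterion: a normalized admissible metric `ρ` (with
`L_ρ(Γ,S) = 1`) is optimal iff there are a nonempty finite subfamily `Γ₀ ⊆ Γ` and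
nonnegative scalars `λ_γ` with `ℓ_ρ(γ) = 1` for all `γ ∈ Γ₀` and
`p·ρ(s)^{p-1} = Σ_{γ∈Γ₀, s∩γ≠∅} λ_γ` for all `s ∈ S`; in this case
`mod_p(Γ,S) = (1/p)·Σ_{γ∈Γ₀} λ_γ`, and the optimal metric is unique up to a positive
scalar multiple. -/
theorem stmt3 {X : Type*} (S : Finset (Set X)) (hcover : ∀ x : X, ∃ s ∈ S, x ∈ s)
    (Γ : Set (Set X)) (hΓ : ∀ γ ∈ Γ, γ.Nonempty) (hΓne : Γ.Nonempty)
    (p : ℝ) (hp : 1 < p)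
    (ρ : Set X → ℝ≥0∞) (hρ : Admissible S ρ) (hL : Lmin S ρ Γ = 1) :
    (modWith S Γ ρ p = cmod S Γ p ↔
      ∃ Γ₀ : Finset (Set X), (↑Γ₀ : Set (Set X)) ⊆ Γ ∧ Γ₀.Nonempty ∧
        ∃ lam : Set X → ℝ≥0∞, (∀ γ ∈ Γ₀, lam γ ≠ ∞) ∧
          (∀ γ ∈ Γ₀, len S ρ γ = 1) ∧
          (∀ s ∈ S, ENNReal.ofReal p * ρ s ^ (p - 1)
              = ∑ γ ∈ Γ₀.filter fun γ => (s ∩ γ).Nonempty, lam γ)) ∧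
    (∀ Γ₀ : Finset (Set X), (↑Γ₀ : Set (Set X)) ⊆ Γ → Γ₀.Nonempty →
      ∀ lam : Set X → ℝ≥0∞, (∀ γ ∈ Γ₀, lam γ ≠ ∞) →
        (∀ γ ∈ Γ₀, len S ρ γ = 1) →
        (∀ s ∈ S, ENNReal.ofReal p * ρ s ^ (p - 1)
            = ∑ γ ∈ Γ₀.filter fun γ => (s ∩ γ).Nonempty, lam γ) →
        cmod S Γ p = (ENNReal.ofReal p)⁻¹ * ∑ γ ∈ Γ₀, lam γ) ∧
    (∀ ρ' : Set X → ℝ≥0∞, Admissible S ρ' →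
      modWith S Γ ρ p = cmod S Γ p → modWith S Γ ρ' p = cmod S Γ p →
      ∃ c : ℝ≥0∞, 0 < c ∧ c ≠ ∞ ∧ ∀ s ∈ S, ρ' s = c * ρ s) := by
  refine ⟨⟨fun hopt => criterion_of_opt hp hΓne hρ hL hopt,
    fun ⟨Γ₀, h1, _, lam, _, h4, h5⟩ =>
      modWith_eq_cmod_of_criterion hp hΓne hρ hL Γ₀ h1 lam h4 h5⟩,
    fun Γ₀ h1 _ lam _ h4 h5 => cmod_formula hp hΓne hρ hL Γ₀ h1 lam h4 h5,
    fun ρ' hρ' hopt hopt' => unique_optimal hp hΓne hρ hL hopt hρ' hopt'⟩
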